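/- Let w and x be nonempty words over Σ, let y be an infinite word beginning with w followed by any infinite concatenation of elements of {w, x}, and let z be an infinite word beginning with x followed by any infinite concatenation of elements of {w, x}. Then the following are equivalent: (a) y and z agree on a prefix of length |w| + |x| − gcd(|w|, |x|); (b) wx = xw; (c) y = z. -/

import Mathlib

/-- `InfCatFrom first S y` says the infinite word `y : ℕ → α` is `first` followed by an
infinite concatenation of words from `S`: there is a sequence of factors, starting with
`first`, all later ones in `S`, whose finite concatenations are all prefixes of `y`. -/
def InfCatFrom {α : Type} (first : List α) (S : Set (List α)) (y : ℕ → α) : Prop :=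
  ∃ f : ℕ → List α, f 0 = first ∧ (∀ n, 1 ≤ n → f n ∈ S) ∧
    ∀ n : ℕ, ∀ i : ℕ, ∀ h : i < ((List.ofFn fun j : Fin n => f j.val).flatten).length,
      y i = ((List.ofFn fun j : Fin n => f j.val).flatten).get ⟨i, h⟩

namespace FWaux

variable {α : Type}

/-- Unbounded pointwise prefixes of `y` lying in `first · S^*`. -/
def P (first : List α) (S : Set (List α)) (y : ℕ → α) : Prop :=
  ∀ m : ℕ, ∃ p : List α, ∃ l : List (List α), (∀ u ∈ l, u ∈ S) ∧
    p = first ++ l.flatten ∧ m ≤ p.length ∧ ∀ i (h : i < p.length), y i = p.get ⟨i, h⟩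

lemma len_flatten_ofFn (f : ℕ → List α) (hf : ∀ j, f j ≠ []) :
    ∀ n : ℕ, n ≤ ((List.ofFn fun j : Fin n => f j.val).flatten).length := by
  intro n
  induction n with
  | zero => simp
  | succ n ih =>
    rw [List.ofFn_succ']
    simp only [List.concat_eq_append, List.flatten_append, List.length_append,
      List.flatten_cons, List.flatten_nil, List.append_nil, Fin.val_last,
      Fin.coe_castSucc]
    have h1 : 1 ≤ (f n).length := List.length_pos_iff.mpr (hf n)
    omega

lemma P_of_inf (first : List α) (S : Set (List α)) (y : ℕ → α)
    (h : InfCatFrom first S y) (h1 : first ≠ []) (hS : ∀ s ∈ S, s ≠ []) :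
    P first S y := by
  obtain ⟨f, hf0, hfS, hpre⟩ := h
  have hne : ∀ j, f j ≠ [] := by
    intro j
    cases j with
    | zero => rw [hf0]; exact h1
    | succ k => exact hS _ (hfS _ (by omega))
  intro m
  refine ⟨(List.ofFn fun j : Fin (m + 1) => f j.val).flatten,
    List.ofFn (fun j : Fin m => f (j.val + 1)), ?_, ?_, ?_, hpre (m + 1)⟩
  · intro u hu
    rw [List.mem_ofFn] at hu
    obtain ⟨i, rfl⟩ := hu
    exact hfS _ (by omega)
  · simp only [List.ofFn_succ, List.flatten_cons, Fin.val_zero, Fin.val_succ, hf0]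
  · calc m ≤ m + 1 := by omega
      _ ≤ _ := len_flatten_ofFn f hne (m + 1)

lemma rewriteL (w x x' : List α) (hx : x = w ++ x') :
    ∀ l : List (List α), (∀ u ∈ l, u ∈ ({w, x} : Set (List α))) →
      ∃ l' : List (List α), (∀ u ∈ l', u ∈ ({w, x'} : Set (List α))) ∧
        l'.flatten = l.flatten := by
  intro l
  induction l with
  | nil => exact fun _ => ⟨[], by simp, rfl⟩
  | cons u t ih =>
    intro h
    obtain ⟨l', hl', hfl⟩ := ih (fun v hv => h v (List.mem_cons_of_mem _ hv))
    have hu := h u List.mem_cons_self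
    simp only [Set.mem_insert_iff, Set.mem_singleton_iff] at hu
    rcases hu with rfl | rfl
    · exact ⟨u :: l', by
        intro v hv
        rcases List.mem_cons.mp hv with rfl | hv
        · exact Set.mem_insert _ _
        · exact hl' v hv, by simp [hfl]⟩
    · refine ⟨w :: x' :: l', ?_, ?_⟩
      · intro v hv
        rcases List.mem_cons.mp hv with rfl | hv
        · exact Set.mem_insert _ _
        rcases List.mem_cons.mp hv with rfl | hv
        · exact Set.mem_insert_of_mem _ rfl
        · exact hl' v hv
      · simp [hfl, hx]

/-- The key induction step: `|w| < |x|` forces `x = w ++ x'` and the shifted words give a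
smaller instance. -/
lemma step (w x : List α) (y z : ℕ → α) (hw : w ≠ []) (hlt : w.length < x.length)
    (hy : P w {w, x} y) (hz : P x {w, x} z)
    (hagree : ∀ i < w.length + x.length - Nat.gcd w.length x.length, y i = z i)
    (hyw : ∀ i (h : i < w.length), y i = w.get ⟨i, h⟩)
    (hzx : ∀ i (h : i < x.length), z i = x.get ⟨i, h⟩) :
    ∃ x' : List α, x = w ++ x' ∧ x' ≠ [] ∧
      P w {w, x'} (fun i => y (i + w.length)) ∧
      P x' {w, x'} (fun i => z (i + w.length)) ∧
      (∀ i < w.length + x'.length - Nat.gcd w.length x'.length,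
        y (i + w.length) = z (i + w.length)) := by
  have hg : Nat.gcd w.length x.length ≤ w.length :=
    Nat.gcd_le_left _ (List.length_pos_iff.mpr hw)
  -- w is a prefix of x
  have hwx : ∀ i (h : i < w.length), w.get ⟨i, h⟩ = x.get ⟨i, lt_trans h hlt⟩ := by
    intro i h
    rw [← hyw i h, ← hzx i (lt_trans h hlt)]
    exact hagree i (by omega)
  have htake : x.take w.length = w := by
    apply List.ext_getElem
    · simp [min_eq_left hlt.le]
    · intro i h1 h2
      rw [List.getElem_take]
      have := (hwx i h2).symm
      simpa [List.get_eq_getElem] using this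
  set x' := x.drop w.length with hx'def
  have hx' : x = w ++ x' := by rw [← htake, hx'def, List.take_append_drop]
  have hlenx : x.length = w.length + x'.length := by rw [hx']; simp
  have hx'ne : x' ≠ [] := by
    intro h
    rw [h] at hlenx
    simp at hlenx
    omega
  have hgcd : Nat.gcd w.length x'.length = Nat.gcd w.length x.length := by
    have : x'.length = x.length - w.length := by omega
    rw [this, Nat.gcd_sub_self_right hlt.le]
  refine ⟨x', hx', hx'ne, ?_, ?_, ?_⟩
  · -- P w {w,x'} (shift y)
    intro m
    obtain ⟨p, l, hlS, hp, hlen, hpt⟩ := hy (m + w.length + 1)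
    have hlne : l ≠ [] := by
      rintro rfl
      rw [hp] at hlen
      simp at hlen
    obtain ⟨u, t, rfl⟩ := List.exists_cons_of_ne_nil hlne
    obtain ⟨l', hl', hfl⟩ := rewriteL w x x' hx' t
      (fun v hv => hlS v (List.mem_cons_of_mem _ hv))
    set p' := (u :: t).flatten with hp'def
    have hpp' : p = w ++ p' := hp
    have hu := hlS u List.mem_cons_self
    simp only [Set.mem_insert_iff, Set.mem_singleton_iff] at hu
    have hdecomp : ∃ l'' : List (List α),
        (∀ v ∈ l'', v ∈ ({w, x'} : Set (List α))) ∧ p' = w ++ l''.flatten := by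
      rcases hu with rfl | rfl
      · exact ⟨l', hl', by rw [hp'def]; simp [hfl]⟩
      · refine ⟨x' :: l', ?_, ?_⟩
        · intro v hv
          rcases List.mem_cons.mp hv with rfl | hv
          · exact Set.mem_insert_of_mem _ rfl
          · exact hl' v hv
        · rw [hp'def]; simp [hfl, hx']
    obtain ⟨l'', hl'', hp'eq⟩ := hdecomp
    have hplen : p.length = w.length + p'.length := by rw [hpp']; simp
    refine ⟨p', l'', hl'', hp'eq, by omega, ?_⟩
    intro i hi
    have hi' : i + w.length < p.length := by omega
    show y (i + w.length) = p'.get ⟨i, hi⟩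
    rw [hpt (i + w.length) hi']
    simp only [List.get_eq_getElem, hpp']
    rw [List.getElem_append_right (by omega)]
    congr 1
    omega
  · -- P x' {w,x'} (shift z)
    intro m
    obtain ⟨p, l, hlS, hp, hlen, hpt⟩ := hz (m + w.length)
    obtain ⟨l', hl', hfl⟩ := rewriteL w x x' hx' l hlS
    set p' := x' ++ l.flatten with hp'def
    have hpp' : p = w ++ p' := by rw [hp, hx']; simp [hp'def]
    have hplen : p.length = w.length + p'.length := by rw [hpp']; simp
    refine ⟨p', l', hl', by rw [hp'def, hfl], by omega, ?_⟩
    intro i hi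
    have hi' : i + w.length < p.length := by omega
    show z (i + w.length) = p'.get ⟨i, hi⟩
    rw [hpt (i + w.length) hi']
    simp only [List.get_eq_getElem, hpp']
    rw [List.getElem_append_right (by omega)]
    congr 1
    omega
  · -- agreement
    intro i hi
    rw [hgcd] at hi
    exact hagree (i + w.length) (by omega)

lemma aux : ∀ N : ℕ, ∀ w x : List α, ∀ y z : ℕ → α,
    w.length + x.length ≤ N → w ≠ [] → x ≠ [] →
    P w {w, x} y → P x {w, x} z →
    (∀ i < w.length + x.length - Nat.gcd w.length x.length, y i = z i) →
    w ++ x = x ++ w := by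
  intro N
  induction N with
  | zero =>
    intro w x y z hN hw
    have : w.length ≠ 0 := fun h => hw (List.length_eq_zero_iff.mp h)
    omega
  | succ N ih =>
    intro w x y z hN hw hx hy hz hagree
    have hyw : ∀ i (h : i < w.length), y i = w.get ⟨i, h⟩ := by
      intro i h
      obtain ⟨p, l, _, hp, _, hpt⟩ := hy 0
      have hip : i < p.length := by rw [hp]; simp; omega
      rw [hpt i hip]
      simp only [List.get_eq_getElem, hp]
      rw [List.getElem_append_left h]
    have hzx : ∀ i (h : i < x.length), z i = x.get ⟨i, h⟩ := by
      intro i h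
      obtain ⟨p, l, _, hp, _, hpt⟩ := hz 0
      have hip : i < p.length := by rw [hp]; simp; omega
      rw [hpt i hip]
      simp only [List.get_eq_getElem, hp]
      rw [List.getElem_append_left h]
    have hwpos : 0 < w.length := List.length_pos_iff.mpr hw
    have hxpos : 0 < x.length := List.length_pos_iff.mpr hx
    rcases lt_trichotomy w.length x.length with hlt | heq | hgt
    · obtain ⟨x', hx'eq, hx'ne, hY, hZ, hA⟩ :=
        step w x y z hw hlt hy hz hagree hyw hzx
      have hxlen : x.length = w.length + x'.length := by rw [hx'eq]; simp
      have hcomm : w ++ x' = x' ++ w := by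
        refine ih w x' _ _ (by omega) hw hx'ne hY hZ hA
      rw [hx'eq]
      calc w ++ (w ++ x') = w ++ (x' ++ w) := by rw [hcomm]
        _ = (w ++ x') ++ w := by rw [List.append_assoc]
    · -- equal lengths: w = x
      have hwx : w = x := by
        apply List.ext_getElem heq
        intro i h1 h2
        have hg : Nat.gcd w.length x.length = w.length := by
          rw [heq, Nat.gcd_self]
        have := hagree i (by omega)
        rw [hyw i h1, hzx i h2] at this
        simpa [List.get_eq_getElem] using this
      rw [hwx]
    · -- symmetric case
      have hpair : ({w, x} : Set (List α)) = {x, w} := Set.pair_comm w x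
      rw [hpair] at hy hz
      have hagree' : ∀ i < x.length + w.length - Nat.gcd x.length w.length,
          z i = y i := by
        intro i hi
        rw [Nat.gcd_comm] at hi
        exact (hagree i (by omega)).symm
      obtain ⟨w', hw'eq, hw'ne, hY, hZ, hA⟩ :=
        step x w z y hx hgt hz hy hagree' hzx hyw
      have hwlen : w.length = x.length + w'.length := by rw [hw'eq]; simp
      have hcomm : x ++ w' = w' ++ x := ih x w' _ _ (by omega) hx hw'ne hY hZ hA
      have : x ++ w = w ++ x := by
        rw [hw'eq]
        calc x ++ (x ++ w') = x ++ (w' ++ x) := by rw [hcomm]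
          _ = (x ++ w') ++ x := by rw [List.append_assoc]
      exact this.symm

lemma comm_flatten (w x v : List α) (hvw : v ++ w = w ++ v) (hvx : v ++ x = x ++ v) :
    ∀ l : List (List α), (∀ u ∈ l, u ∈ ({w, x} : Set (List α))) →
      v ++ l.flatten = l.flatten ++ v := by
  intro l
  induction l with
  | nil => simp
  | cons u t ih =>
    intro h
    have ht := ih (fun a ha => h a (List.mem_cons_of_mem _ ha))
    have hu := h u List.mem_cons_self
    simp only [Set.mem_insert_iff, Set.mem_singleton_iff] at hu
    have huv : v ++ u = u ++ v := by rcases hu with rfl | rfl <;> assumption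
    calc v ++ (u :: t).flatten = v ++ (u ++ t.flatten) := by rw [List.flatten_cons]
      _ = (v ++ u) ++ t.flatten := by rw [List.append_assoc]
      _ = (u ++ v) ++ t.flatten := by rw [huv]
      _ = u ++ (v ++ t.flatten) := by rw [List.append_assoc]
      _ = u ++ (t.flatten ++ v) := by rw [ht]
      _ = (u ++ t.flatten) ++ v := by rw [List.append_assoc]
      _ = (u :: t).flatten ++ v := by rw [List.flatten_cons]

lemma eq_of_comm (w x : List α) (y z : ℕ → α) (h : w ++ x = x ++ w)
    (hy : P w {w, x} y) (hz : P x {w, x} z) : y = z := by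
  funext i
  obtain ⟨p, l, hlS, hp, hlen, hpt⟩ := hy (i + 1)
  obtain ⟨q, l₂, hl2S, hq, hlen2, hpt2⟩ := hz (i + 1)
  have hip : i < p.length := by omega
  have hiq : i < q.length := by omega
  have hlmem : ∀ u ∈ (w :: l), u ∈ ({w, x} : Set (List α)) := by
    intro u hu
    rcases List.mem_cons.mp hu with rfl | hu
    · exact Set.mem_insert _ _
    · exact hlS u hu
  have hl2mem : ∀ u ∈ (x :: l₂), u ∈ ({w, x} : Set (List α)) := by
    intro u hu
    rcases List.mem_cons.mp hu with rfl | hu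
    · exact Set.mem_insert_of_mem _ rfl
    · exact hl2S u hu
  have hpflat : p = (w :: l).flatten := by rw [List.flatten_cons, hp]
  have hqflat : q = (x :: l₂).flatten := by rw [List.flatten_cons, hq]
  have hpw : w ++ p = p ++ w := by
    rw [hpflat]; exact comm_flatten w x w rfl h _ hlmem
  have hpx : x ++ p = p ++ x := by
    rw [hpflat]; exact comm_flatten w x x h.symm rfl _ hlmem
  have hpq : p ++ q = q ++ p := by
    rw [hqflat]; exact comm_flatten w x p hpw.symm hpx.symm _ hl2mem
  have key : p[i]'hip = q[i]'hiq := by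
    have e1 : (p ++ q)[i]'(by rw [List.length_append]; omega) = p[i]'hip :=
      List.getElem_append_left hip
    have e2 : (q ++ p)[i]'(by rw [List.length_append]; omega) = q[i]'hiq :=
      List.getElem_append_left hiq
    rw [← e1, ← e2]
    exact List.getElem_of_eq hpq (by rw [List.length_append]; omega)
  rw [hpt i hip, hpt2 i hiq]
  simpa [List.get_eq_getElem] using key

end FWaux

/-- a Fine–Wilf generalization. For nonempty words `w, x`, and infinite
words `y ∈ w{w,x}^ω`, `z ∈ x{w,x}^ω`, TFAE: (a) `y` and `z` agree on a prefix of length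
`|w| + |x| − gcd(|w|,|x|)`; (b) `wx = xw`; (c) `y = z`. -/
theorem fine_wilf_infinite {α : Type} (w x : List α) (hw : w ≠ []) (hx : x ≠ [])
    (y z : ℕ → α)
    (hy : InfCatFrom w {w, x} y) (hz : InfCatFrom x {w, x} z) :
    ((∀ i < w.length + x.length - Nat.gcd w.length x.length, y i = z i) ↔
      w ++ x = x ++ w) ∧
    ((w ++ x = x ++ w) ↔ y = z) := by
  have hSne : ∀ s ∈ ({w, x} : Set (List α)), s ≠ [] := by
    intro s hs
    simp only [Set.mem_insert_iff, Set.mem_singleton_iff] at hs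
    rcases hs with rfl | rfl <;> assumption
  have Py := FWaux.P_of_inf w {w, x} y hy hw hSne
  have Pz := FWaux.P_of_inf x {w, x} z hz hx hSne
  have hab : (∀ i < w.length + x.length - Nat.gcd w.length x.length, y i = z i) →
      w ++ x = x ++ w :=
    fun h => FWaux.aux (w.length + x.length) w x y z le_rfl hw hx Py Pz h
  have hbc : w ++ x = x ++ w → y = z := fun h => FWaux.eq_of_comm w x y z h Py Pz
  exact ⟨⟨hab, fun h i _ => by rw [hbc h]⟩,
    ⟨hbc, fun h => hab (fun i _ => by rw [h])⟩⟩
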